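/- Let S denote the unilateral shift on ℓ²(ℕ), defined by S(a₀, a₁, a₂, …) = (0, a₀, a₁, …). The operator S ⊕ S*, acting on ℓ²(ℕ) ⊕ ℓ²(ℕ) by (x, y) ↦ (Sx, S*y), is complex symmetric. -/

import Mathlib

open Filter ContinuousLinearMap

noncomputable section

/-- A conjugation on a complex Hilbert space `H` is a conjugate-linear, isometric
involution `C : H → H`. -/
def IsConjugation {H : Type*} [NormedAddCommGroup H] [InnerProductSpace ℂ H]
    (C : H → H) : Prop :=
  (∀ x y : H, C (x + y) = C x + C y) ∧
  (∀ (a : ℂ) (x : H), C (a • x) = (starRingEnd ℂ) a • C x) ∧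
  (∀ x : H, ‖C x‖ = ‖x‖) ∧
  (∀ x : H, C (C x) = x)

/-- A bounded operator `T` on a complex Hilbert space is complex symmetric if there is a
conjugation `C` with `T = C T* C`. -/
def IsComplexSymmetric {H : Type*} [NormedAddCommGroup H] [InnerProductSpace ℂ H]
    [CompleteSpace H] (T : H →L[ℂ] H) : Prop :=
  ∃ C : H → H, IsConjugation C ∧
    ∀ x : H, T x = C (ContinuousLinearMap.adjoint T (C x))

/-- `ℓ²(ℕ)` over `ℂ`. -/
abbrev ellTwo : Type := lp (fun _ : ℕ => ℂ) 2

/-- `S` is the unilateral shift on `ℓ²(ℕ)`: `S (a₀, a₁, a₂, …) = (0, a₀, a₁, …)`. -/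
def IsUnilateralShift (S : ellTwo →L[ℂ] ellTwo) : Prop :=
  ∀ a : ellTwo, S a 0 = 0 ∧ ∀ n : ℕ, S a (n + 1) = a n

local notation "⟪" x ", " y "⟫" => inner (𝕜 := ℂ) x y

lemma ellTwo_inner_star (a b : ellTwo) : ⟪star a, star b⟫ = ⟪b, a⟫ := by
  rw [lp.inner_eq_tsum, lp.inner_eq_tsum]
  congr 1; funext i
  simp [lp.star_apply, RCLike.inner_apply, mul_comm]

lemma ellTwo_inner_star' (a b : ellTwo) : ⟪a, star b⟫ = ⟪b, star a⟫ := by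
  have := ellTwo_inner_star (star a) b
  rwa [star_star] at this

/-- If `S` is the unilateral shift on `ℓ²(ℕ)`, then `S ⊕ S*`, acting on
`ℓ²(ℕ) ⊕ ℓ²(ℕ)` by `(x, y) ↦ (S x, S* y)`, is complex symmetric. -/
theorem isComplexSymmetric_shift_dirsum_adjoint
    (S : ellTwo →L[ℂ] ellTwo) (hS : IsUnilateralShift S)
    (T : WithLp 2 (ellTwo × ellTwo) →L[ℂ] WithLp 2 (ellTwo × ellTwo))
    (hT : ∀ x : WithLp 2 (ellTwo × ellTwo),
      (T x).ofLp.1 = S x.ofLp.1 ∧ (T x).ofLp.2 = ContinuousLinearMap.adjoint S x.ofLp.2) :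
    IsComplexSymmetric T := by
  -- star commutes with S
  have hstarS : ∀ x : ellTwo, star (S x) = S (star x) := by
    intro x
    apply lp.ext
    funext n
    cases n with
    | zero => simp [lp.star_apply, (hS x).1, (hS (star x)).1]
    | succ n => simp [lp.star_apply, (hS x).2 n, (hS (star x)).2 n]
  -- star commutes with S†
  have hstarSadj : ∀ y : ellTwo, star (ContinuousLinearMap.adjoint S y)
      = ContinuousLinearMap.adjoint S (star y) := by
    intro y
    apply ext_inner_left ℂ
    intro v
    rw [ellTwo_inner_star' v (ContinuousLinearMap.adjoint S y),
      ContinuousLinearMap.adjoint_inner_left, ContinuousLinearMap.adjoint_inner_right,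
      ← hstarS, ellTwo_inner_star' (S v) y]
  -- the conjugation
  set C : WithLp 2 (ellTwo × ellTwo) → WithLp 2 (ellTwo × ellTwo) :=
    fun x => (WithLp.equiv 2 (ellTwo × ellTwo)).symm (star x.ofLp.2, star x.ofLp.1) with hC
  have hCfst : ∀ x, (C x).ofLp.1 = star x.ofLp.2 := fun x => rfl
  have hCsnd : ∀ x, (C x).ofLp.2 = star x.ofLp.1 := fun x => rfl
  refine ⟨C, ⟨?_, ?_, ?_, ?_⟩, ?_⟩
  · intro x y
    apply (WithLp.equiv 2 (ellTwo × ellTwo)).injective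
    exact Prod.ext (by simp [hC, star_add]) (by simp [hC, star_add])
  · intro a x
    apply (WithLp.equiv 2 (ellTwo × ellTwo)).injective
    refine Prod.ext ?_ ?_
    · show star (a • x).ofLp.2 = ((starRingEnd ℂ) a • C x).ofLp.1
      show star (a • x.ofLp.2) = (starRingEnd ℂ) a • star x.ofLp.2
      simp [star_smul, Complex.star_def]
    · show star (a • x).ofLp.1 = ((starRingEnd ℂ) a • C x).ofLp.2
      show star (a • x.ofLp.1) = (starRingEnd ℂ) a • star x.ofLp.1
      simp [star_smul, Complex.star_def]
  · intro x
    rw [WithLp.prod_norm_eq_of_L2, WithLp.prod_norm_eq_of_L2]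
    show √(‖(C x).ofLp.1‖ ^ 2 + ‖(C x).ofLp.2‖ ^ 2) = √(‖x.ofLp.1‖ ^ 2 + ‖x.ofLp.2‖ ^ 2)
    rw [hCfst, hCsnd, norm_star, norm_star, add_comm]
  · intro x
    apply (WithLp.equiv 2 (ellTwo × ellTwo)).injective
    exact Prod.ext (by simp [hC]) (by simp [hC])
  · -- main identity
    intro x
    -- compute adjoint of T
    have hTadj : ∀ y : WithLp 2 (ellTwo × ellTwo),
        (ContinuousLinearMap.adjoint T y).ofLp.1 = ContinuousLinearMap.adjoint S y.ofLp.1 ∧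
        (ContinuousLinearMap.adjoint T y).ofLp.2 = S y.ofLp.2 := by
      intro y
      set A : WithLp 2 (ellTwo × ellTwo) →L[ℂ] WithLp 2 (ellTwo × ellTwo) :=
        ((WithLp.prodContinuousLinearEquiv 2 ℂ ellTwo ellTwo).symm :
            (ellTwo × ellTwo) →L[ℂ] WithLp 2 (ellTwo × ellTwo)) ∘L
          ((ContinuousLinearMap.adjoint S).prodMap S) ∘L
          ((WithLp.prodContinuousLinearEquiv 2 ℂ ellTwo ellTwo) :
            WithLp 2 (ellTwo × ellTwo) →L[ℂ] (ellTwo × ellTwo)) with hA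
      have hAfst : ∀ z, (A z).ofLp.1 = ContinuousLinearMap.adjoint S z.ofLp.1 := fun z => rfl
      have hAsnd : ∀ z, (A z).ofLp.2 = S z.ofLp.2 := fun z => rfl
      have : A = ContinuousLinearMap.adjoint T := by
        rw [ContinuousLinearMap.eq_adjoint_iff]
        intro u v
        rw [WithLp.prod_inner_apply, WithLp.prod_inner_apply, hAfst, hAsnd,
          (hT v).1, (hT v).2, ContinuousLinearMap.adjoint_inner_left,
          ContinuousLinearMap.adjoint_inner_right]
      rw [← this]
      exact ⟨hAfst y, hAsnd y⟩
    apply (WithLp.equiv 2 (ellTwo × ellTwo)).injective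
    refine Prod.ext ?_ ?_
    · show (T x).ofLp.1 = (C (ContinuousLinearMap.adjoint T (C x))).ofLp.1
      rw [(hT x).1, hCfst, (hTadj (C x)).2, hCsnd, ← hstarS, star_star]
    · show (T x).ofLp.2 = (C (ContinuousLinearMap.adjoint T (C x))).ofLp.2
      rw [(hT x).2, hCsnd, (hTadj (C x)).1, hCfst, ← hstarSadj, star_star]

end
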